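/- (Theorem 1, second part.) Let a and b be operators on ℂ² satisfying ab + ba = 1, a² = 0, b² = 0, and suppose there exist nonzero vectors φ₀, Ψ₀ ∈ ℂ² with aφ₀ = 0 and b*Ψ₀ = 0. Then there exist an operator c on ℂ² with cc* + c*c = 1 and c² = 0, and a self-adjoint strictly positive (positive definite) operator T on ℂ², such that a = T c T⁻¹ and b = T c* T⁻¹. -/

import Mathlib

open Matrix
open scoped InnerProductSpace ComplexOrder

noncomputable section

/-- Action of a 2×2 complex matrix (an operator) on a vector of ℂ². -/
def act (A : Matrix (Fin 2) (Fin 2) ℂ) (x : EuclideanSpace ℂ (Fin 2)) :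
    EuclideanSpace ℂ (Fin 2) := WithLp.toLp 2 (A.mulVec x)

/-- Theorem 1, second part: any pseudo-fermion pair with nonzero vacua is
similar, via a self-adjoint positive definite `T`, to a fermion pair
`(c, c*)`: `a = T c T⁻¹` and `b = T c* T⁻¹`. -/
-- aux lemma: PosSemidef + unit det ⇒ PosDef
lemma posDef_of_posSemidef_isUnit {n : Type*} [Fintype n] [DecidableEq n]
    {Q : Matrix n n ℂ} (hQ : Q.PosSemidef) (h : IsUnit Q.det) : Q.PosDef := by
  exact hQ.posDef_iff_isUnit.mpr ((Matrix.isUnit_iff_isUnit_det Q).mpr h)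

theorem stmt10 (a b : Matrix (Fin 2) (Fin 2) ℂ)
    (hab : a * b + b * a = 1) (ha2 : a * a = 0) (hb2 : b * b = 0)
    (φ₀ Ψ₀ : EuclideanSpace ℂ (Fin 2)) (hφ₀ : φ₀ ≠ 0) (hΨ₀ : Ψ₀ ≠ 0)
    (hvacφ : act a φ₀ = 0) (hvacΨ : act bᴴ Ψ₀ = 0) :
    ∃ c T : Matrix (Fin 2) (Fin 2) ℂ,
      c * cᴴ + cᴴ * c = 1 ∧ c * c = 0 ∧
      T.IsHermitian ∧ T.PosDef ∧
      a = T * c * T⁻¹ ∧ b = T * cᴴ * T⁻¹ := by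
    -- vectors as plain functions
  have haφ : a *ᵥ (φ₀ : Fin 2 → ℂ) = 0 := by
    have := congrArg WithLp.ofLp hvacφ; simpa [act] using this
  set φ₁ : Fin 2 → ℂ := b *ᵥ (φ₀ : Fin 2 → ℂ) with hφ₁def
  have haφ₁ : a *ᵥ φ₁ = (φ₀ : Fin 2 → ℂ) := by
    rw [hφ₁def, mulVec_mulVec]
    have h : a * b = 1 - b * a := eq_sub_of_add_eq hab
    rw [h, sub_mulVec, one_mulVec, ← mulVec_mulVec, haφ, mulVec_zero, sub_zero]
  have hbφ₁ : b *ᵥ φ₁ = 0 := by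
    rw [hφ₁def, mulVec_mulVec, hb2, zero_mulVec]
  -- φ₀ nonzero as function
  have hφ₀' : (φ₀ : Fin 2 → ℂ) ≠ 0 := fun h => hφ₀ (by ext i; exact congrFun h i)
  -- the matrix with columns φ₀ φ₁
  set c : Matrix (Fin 2) (Fin 2) ℂ := !![0,1;0,0] with hc
  set S : Matrix (Fin 2) (Fin 2) ℂ :=
    Matrix.of (fun i j => if j = 0 then φ₀ i else φ₁ i) with hS
  have hcol : ∀ v : Fin 2 → ℂ, S *ᵥ v = fun i => v 0 * φ₀ i + v 1 * φ₁ i := by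
    intro v; funext i
    simp [hS, mulVec, dotProduct, Fin.sum_univ_two, mul_comm]
  have hSdet : IsUnit S.det := by
    by_contra h
    have hdet0 : S.det = 0 := by
      simpa [isUnit_iff_ne_zero] using h
    obtain ⟨v, hv, hv0⟩ := (Matrix.exists_mulVec_eq_zero_iff).mpr hdet0
    rw [hcol] at hv0
    have e0 := congrFun haφ 0; have e1 := congrFun haφ 1
    have f0 := congrFun haφ₁ 0; have f1 := congrFun haφ₁ 1
    simp only [mulVec, dotProduct, Fin.sum_univ_two, Pi.zero_apply] at e0 e1 f0 f1
    have h3 : a *ᵥ (fun i => v 0 * φ₀ i + v 1 * φ₁ i) = 0 := by rw [hv0, mulVec_zero]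
    have h30 := congrFun h3 0
    have h31 := congrFun h3 1
    simp only [mulVec, dotProduct, Fin.sum_univ_two, Pi.zero_apply] at h30 h31
    have k0 : v 1 * φ₀ 0 = 0 := by linear_combination h30 - v 0 * e0 - v 1 * f0
    have k1 : v 1 * φ₀ 1 = 0 := by linear_combination h31 - v 0 * e1 - v 1 * f1
    have key : ∀ i, v 1 * φ₀ i = 0 := by
      intro i; fin_cases i; exacts [k0, k1]
    obtain ⟨i, hi⟩ := Function.ne_iff.mp hφ₀'
    have h1 : v 1 = 0 := by
      have := key i
      try simp only [Pi.zero_apply] at hi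
      exact (mul_eq_zero.mp this).resolve_right hi
    have h0 : v 0 = 0 := by
      rw [h1] at hv0
      simp only [zero_mul, add_zero] at hv0
      by_contra hne
      apply hφ₀'
      funext i
      have := congrFun hv0 i
      try simp only [Pi.zero_apply] at this
      exact (mul_eq_zero.mp this).resolve_left hne
    exact hv (funext fun i => by fin_cases i <;> assumption)
  -- a*S = S*c and b*S = S*cᴴ
  have haS : a * S = S * c := by
    ext i j
    have e := congrFun haφ i
    have f := congrFun haφ₁ i
    simp only [mulVec, dotProduct, Fin.sum_univ_two, Pi.zero_apply] at e f
    fin_cases j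
    · simp only [Matrix.mul_apply, Fin.sum_univ_two, hS, hc, Matrix.of_apply]
      simp [e]
    · simp only [Matrix.mul_apply, Fin.sum_univ_two, hS, hc, Matrix.of_apply]
      simp [f]
  have hbS : b * S = S * cᴴ := by
    ext i j
    have e : b *ᵥ (φ₀ : Fin 2 → ℂ) = φ₁ := rfl
    have e := congrFun e i
    have f := congrFun hbφ₁ i
    simp only [mulVec, dotProduct, Fin.sum_univ_two, Pi.zero_apply] at e f
    fin_cases j
    · simp only [Matrix.mul_apply, Fin.sum_univ_two, hS, hc, Matrix.of_apply,
        conjTranspose_apply]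
      simp [e]
    · simp only [Matrix.mul_apply, Fin.sum_univ_two, hS, hc, Matrix.of_apply,
        conjTranspose_apply]
      simp [f]
  have haSc : a = S * c * S⁻¹ := by
    have h := congrArg (· * S⁻¹) haS
    simpa [Matrix.mul_assoc, Matrix.mul_nonsing_inv _ hSdet] using h
  have hbSc : b = S * cᴴ * S⁻¹ := by
    have h := congrArg (· * S⁻¹) hbS
    simpa [Matrix.mul_assoc, Matrix.mul_nonsing_inv _ hSdet] using h
  -- polar data
  have hSHdet : IsUnit Sᴴ.det := by rw [det_conjTranspose]; exact hSdet.star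
  have hPsemi : (S * Sᴴ).PosSemidef := posSemidef_self_mul_conjTranspose S
  have hPdet : IsUnit (S * Sᴴ).det := by
    rw [det_mul, det_conjTranspose]
    exact hSdet.mul hSdet.star
  open scoped MatrixOrder in
  set T : Matrix (Fin 2) (Fin 2) ℂ := CFC.sqrt (S * Sᴴ) with hTdef
  open scoped MatrixOrder in
  have hTsemi : T.PosSemidef := (CFC.sqrt_nonneg _).posSemidef
  open scoped MatrixOrder in
  have hTT : T * T = S * Sᴴ := CFC.sqrt_mul_sqrt_self _ hPsemi.nonneg
  have hTdet : IsUnit T.det := by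
    have h : T.det * T.det = (S * Sᴴ).det := by rw [← det_mul, hTT]
    rw [← h] at hPdet
    exact isUnit_of_mul_isUnit_left hPdet
  have hT : T.PosDef := posDef_of_posSemidef_isUnit hTsemi hTdet
  have hTH : T.IsHermitian := hTsemi.1
  set U : Matrix (Fin 2) (Fin 2) ℂ := T⁻¹ * S with hUdef
  have hUH : Uᴴ = Sᴴ * T⁻¹ := by
    rw [hUdef, conjTranspose_mul, conjTranspose_nonsing_inv, hTH.eq]
  have hUUH : U * Uᴴ = 1 := by
    rw [hUH, hUdef]
    calc T⁻¹ * S * (Sᴴ * T⁻¹) = T⁻¹ * (S * Sᴴ) * T⁻¹ := by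
          simp only [Matrix.mul_assoc]
      _ = T⁻¹ * (T * T) * T⁻¹ := by rw [hTT]
      _ = (T⁻¹ * T) * (T * T⁻¹) := by simp only [Matrix.mul_assoc]
      _ = 1 := by
          rw [Matrix.nonsing_inv_mul _ hTdet, Matrix.mul_nonsing_inv _ hTdet, one_mul]
  have hUHU : Uᴴ * U = 1 := mul_eq_one_comm.mp hUUH
  have hTinv2 : T⁻¹ * T⁻¹ = (S * Sᴴ)⁻¹ := by rw [← Matrix.mul_inv_rev, hTT]
  have hkey : Sᴴ * (S * Sᴴ)⁻¹ = S⁻¹ := by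
    rw [Matrix.mul_inv_rev, ← Matrix.mul_assoc, Matrix.mul_nonsing_inv _ hSHdet, one_mul]
  have conj : ∀ m : Matrix (Fin 2) (Fin 2) ℂ,
      T * (U * m * Uᴴ) * T⁻¹ = S * m * S⁻¹ := by
    intro m
    rw [hUH, hUdef]
    simp only [Matrix.mul_assoc]
    rw [hTinv2, hkey, ← Matrix.mul_assoc T T⁻¹, Matrix.mul_nonsing_inv _ hTdet, one_mul]
  have hmid : ∀ m n : Matrix (Fin 2) (Fin 2) ℂ,
      (U * m * Uᴴ) * (U * n * Uᴴ) = U * (m * n) * Uᴴ := by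
    intro m n
    have h : (U * m * Uᴴ) * (U * n * Uᴴ) = U * m * (Uᴴ * U) * (n * Uᴴ) := by
      simp only [Matrix.mul_assoc]
    rw [h, hUHU, mul_one]
    simp only [Matrix.mul_assoc]
  have hccH : c * cᴴ + cᴴ * c = 1 := by
    ext i j
    fin_cases i <;> fin_cases j <;>
      simp [hc, Matrix.mul_apply, Matrix.vecMul, dotProduct, Fin.sum_univ_two,
        Matrix.one_apply, Matrix.conjTranspose_apply]
  have hcc : c * c = 0 := by
    ext i j
    fin_cases i <;> fin_cases j <;>
      simp [hc, Matrix.mul_apply, Matrix.vecMul, dotProduct, Fin.sum_univ_two,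
        Matrix.conjTranspose_apply]
  have hcH : (U * c * Uᴴ)ᴴ = U * cᴴ * Uᴴ := by
    simp [conjTranspose_mul, Matrix.mul_assoc]
  refine ⟨U * c * Uᴴ, T, ?_, ?_, hTH, hT, ?_, ?_⟩
  · rw [hcH, hmid, hmid, ← Matrix.add_mul, ← Matrix.mul_add, hccH, mul_one, hUUH]
  · rw [hmid, hcc, mul_zero, zero_mul]
  · rw [conj, ← haSc]
  · rw [hcH, conj, ← hbSc]
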